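/- Let (D, G) be a data symmetry and H ≤ G a subgroup. The G-set G/H^r of right cosets of H is nominal with respect to (D, G) if and only if H is open, i.e., if and only if there exists a finite set C ⊆ D with G_C ≤ H. -/

import Mathlib

/-- The equivalence relation on a group `G` whose classes are the right cosets
`Hπ` of a subgroup `H`: `x ~ y` iff `x * y⁻¹ ∈ H` (so that `⟦x⟧` stands for `Hx`). -/
def rightCosetSetoid {G : Type*} [Group G] (H : Subgroup G) : Setoid G where
  r x y := x * y⁻¹ ∈ H
  iseqv := by
    refine ⟨fun x => by simpa using H.one_mem, fun {x y} h => ?_, fun {x y z} h1 h2 => ?_⟩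
    · simpa [mul_inv_rev] using H.inv_mem h
    · simpa [mul_assoc] using H.mul_mem h1 h2

/-- For a data symmetry (D, G) and a subgroup H ≤ G, the G-set G/H^r of
right cosets (with action (Hπ)·σ = H(πσ)) is nominal iff H is open, i.e., iff G_C ≤ H
for some finite C ⊆ D. -/
theorem coset_space_nominal_iff_open {D : Type*} (G : Subgroup (Equiv.Perm D))
    (H : Subgroup ↥G) :
    -- every right coset Hπ has a finite support
    (∀ π : ↥G, ∃ C : Finset D,
      ∀ σ : ↥G, (∀ c ∈ C, (σ : Equiv.Perm D) c = c) →
        Quotient.mk (rightCosetSetoid H) (π * σ) = Quotient.mk (rightCosetSetoid H) π)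
    ↔
    -- H is open: some pointwise stabilizer G_C is contained in H
    (∃ C : Finset D, ∀ σ : ↥G, (∀ c ∈ C, (σ : Equiv.Perm D) c = c) → σ ∈ H) := by
  classical
  constructor
  · intro h
    obtain ⟨C, hC⟩ := h 1
    refine ⟨C, fun σ hσ => ?_⟩
    have := Quotient.exact (hC σ hσ)
    have h2 : (1 * σ) * 1⁻¹ ∈ H := this
    simpa [rightCosetSetoid] using h2
  · intro ⟨C, hC⟩ π
    refine ⟨C.image (π : Equiv.Perm D).symm, fun σ hσ => ?_⟩
    apply Quotient.sound
    show (π * σ) * π⁻¹ ∈ H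
    apply hC
    intro c hc
    have h1 : (σ : Equiv.Perm D) ((π : Equiv.Perm D).symm c) = (π : Equiv.Perm D).symm c :=
      hσ _ (Finset.mem_image_of_mem _ hc)
    have : ((π * σ * π⁻¹ : ↥G) : Equiv.Perm D) c
        = (π : Equiv.Perm D) ((σ : Equiv.Perm D) ((π : Equiv.Perm D).symm c)) := by
      simp [Subgroup.coe_mul, Equiv.Perm.mul_apply]
    rw [this, h1, Equiv.apply_symm_apply]
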